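/- Let A(t) be an n×l real matrix function of class C¹ on [a,b] with l ≤ n, and set B(t) = A(t)ᵀA(t). Suppose det B(t) ≠ 0 for t ∈ (a,b), det B(a) = det B(b) = 0, and there exist h_a > 0, h_b > 0 with det B(a+t) = h_a² t² + o(t²) as t → 0+ and det B(b+t) = h_b² t² + o(t²) as t → 0−. Fix α > 0, γ > 0, κ > 0. Then there exists λ > 0, depending only on A, α, γ and κ, such that for every continuous ℝˡ-valued function r on [a,b] satisfying ‖r‖_{i,a,b} ≥ α‖r‖_{a,b}, |A(t)r(t)| ≤ κ(t−a)‖r‖_{a,b} for t ∈ [a, a+γ), and |A(t)r(t)| ≤ κ(b−t)‖r‖_{a,b} for t ∈ (b−γ, b], one has ‖Ar‖_{i,a,b} ≥ λ‖r‖_{i,a,b}. -/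
import Mathlib


open Set Filter Asymptotics Topology MeasureTheory Matrix

/-- Euclidean norm of a vector in `ℝˡ`. -/
noncomputable def euclNorm {l : ℕ} (v : Fin l → ℝ) : ℝ := Real.sqrt (∑ i, v i ^ 2)

/-- `‖q‖_{a,b} = max_{t ∈ [a,b]} |q(t)|`. -/
noncomputable def supNorm {l : ℕ} (a b : ℝ) (q : ℝ → Fin l → ℝ) : ℝ :=
  sSup ((fun t => euclNorm (q t)) '' Set.Icc a b)

/-- `‖q‖_{i,a,b} = ∫_a^b |q(t)| dt`. -/
noncomputable def intNorm {l : ℕ} (a b : ℝ) (q : ℝ → Fin l → ℝ) : ℝ :=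
  ∫ t in a..b, euclNorm (q t)

lemma euclNorm_nonneg {l : ℕ} (v : Fin l → ℝ) : 0 ≤ euclNorm v := Real.sqrt_nonneg _

lemma continuous_euclNorm {l : ℕ} : Continuous (euclNorm (l := l)) :=
  Real.continuous_sqrt.comp (continuous_finset_sum _ fun i _ => (continuous_apply i).pow 2)

lemma euclNorm_eq_zero {l : ℕ} {v : Fin l → ℝ} (h : euclNorm v = 0) : v = 0 := by
  have h0 : ∀ i ∈ Finset.univ, 0 ≤ v i ^ 2 := fun i _ => sq_nonneg _
  have hs : ∑ i, v i ^ 2 = 0 :=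
    le_antisymm ((Real.sqrt_eq_zero' ..).1 h) (Finset.sum_nonneg h0)
  funext i
  have := (Finset.sum_eq_zero_iff_of_nonneg h0).1 hs i (Finset.mem_univ i)
  exact pow_eq_zero_iff two_ne_zero |>.1 this

lemma euclNorm_zero {l : ℕ} : euclNorm (0 : Fin l → ℝ) = 0 := by
  simp [euclNorm]

lemma euclNorm_smul {l : ℕ} (c : ℝ) (v : Fin l → ℝ) :
    euclNorm (c • v) = |c| * euclNorm v := by
  unfold euclNorm
  have : ∑ i, (c • v) i ^ 2 = c ^ 2 * ∑ i, v i ^ 2 := by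
    rw [Finset.mul_sum]; congr 1; funext i; simp [mul_pow]
  rw [this, Real.sqrt_mul (sq_nonneg c), Real.sqrt_sq_eq_abs]

lemma le_supNorm {l : ℕ} {a b : ℝ} {q : ℝ → Fin l → ℝ} (hq : ContinuousOn q (Set.Icc a b))
    {t : ℝ} (ht : t ∈ Set.Icc a b) : euclNorm (q t) ≤ supNorm a b q :=
  le_csSup ((isCompact_Icc.image_of_continuousOn
    (continuous_euclNorm.comp_continuousOn hq)).bddAbove) ⟨t, ht, rfl⟩

set_option maxHeartbeats 2000000 in
theorem stmt8 (n l : ℕ) (hln : l ≤ n) (a b : ℝ) (hab : a < b)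
    (A : ℝ → Matrix (Fin n) (Fin l) ℝ)
    (hA : ∀ i j, ContDiffOn ℝ 1 (fun t => A t i j) (Set.Icc a b))
    (B : ℝ → Matrix (Fin l) (Fin l) ℝ) (hB : ∀ t, B t = (A t)ᵀ * A t)
    (hdet : ∀ t ∈ Set.Ioo a b, (B t).det ≠ 0)
    (hdeta : (B a).det = 0) (hdetb : (B b).det = 0)
    (ha hb : ℝ) (hha : 0 < ha) (hhb : 0 < hb)
    (hasyma : (fun t => (B (a + t)).det - ha ^ 2 * t ^ 2) =o[𝓝[>] (0 : ℝ)] fun t => t ^ 2)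
    (hasymb : (fun t => (B (b + t)).det - hb ^ 2 * t ^ 2) =o[𝓝[<] (0 : ℝ)] fun t => t ^ 2)
    (α γ κ : ℝ) (hα : 0 < α) (hγ : 0 < γ) (hκ : 0 < κ) :
    ∃ lam > 0, ∀ r : ℝ → Fin l → ℝ, ContinuousOn r (Set.Icc a b) →
      intNorm a b r ≥ α * supNorm a b r →
      (∀ t, a ≤ t → t < a + γ → t ≤ b →
        euclNorm ((A t).mulVec (r t)) ≤ κ * (t - a) * supNorm a b r) →
      (∀ t, b - γ < t → t ≤ b → a ≤ t →
        euclNorm ((A t).mulVec (r t)) ≤ κ * (b - t) * supNorm a b r) →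
      (∫ t in a..b, euclNorm ((A t).mulVec (r t))) ≥ lam * intNorm a b r := by
  rcases Nat.eq_zero_or_pos l with hl | hl
  · subst hl
    refine ⟨1, one_pos, fun r _ _ _ _ => ?_⟩
    simp [intNorm, euclNorm]
  -- Main case: l ≥ 1
  set δ : ℝ := min (α / 4) ((b - a) / 4) with hδdef
  have hδα : δ ≤ α / 4 := min_le_left _ _
  have hδba : δ ≤ (b - a) / 4 := min_le_right _ _
  have hδ : 0 < δ := lt_min (by linarith) (by linarith)
  have hKle : a + δ ≤ b - δ := by linarith
  have hKsub : Set.Icc (a + δ) (b - δ) ⊆ Set.Ioo a b := fun t ht =>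
    ⟨by linarith [ht.1], by linarith [ht.2]⟩
  have hKIcc : Set.Icc (a + δ) (b - δ) ⊆ Set.Icc a b := fun t ht =>
    ⟨by linarith [ht.1], by linarith [ht.2]⟩
  -- the unit sphere
  set S : Set (Fin l → ℝ) := {v | euclNorm v = 1} with hSdef
  have hScl : IsClosed S := isClosed_eq continuous_euclNorm continuous_const
  have hSbd : Bornology.IsBounded S := by
    apply Bornology.IsBounded.subset (Metric.isBounded_closedBall (x := (0 : Fin l → ℝ)) (r := 1))
    intro v hv
    have hv1 : ∑ i, v i ^ 2 = 1 := Real.sqrt_eq_one.1 hv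
    simp only [Metric.mem_closedBall, dist_zero_right]
    refine (pi_norm_le_iff_of_nonneg zero_le_one).2 fun i => ?_
    have h1 : v i ^ 2 ≤ 1 := by
      calc v i ^ 2 ≤ ∑ j, v j ^ 2 :=
            Finset.single_le_sum (fun j _ => sq_nonneg (v j)) (Finset.mem_univ i)
        _ = 1 := hv1
    rw [Real.norm_eq_abs, ← Real.sqrt_one, ← Real.sqrt_sq_eq_abs]
    exact Real.sqrt_le_sqrt h1
  have hScomp : IsCompact S := Metric.isCompact_of_isClosed_isBounded hScl hSbd
  have hSne : S.Nonempty := by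
    refine ⟨fun i => if i = (⟨0, hl⟩ : Fin l) then (1 : ℝ) else 0, ?_⟩
    simp only [hSdef, Set.mem_setOf_eq, euclNorm]
    have : ∑ i, (if i = (⟨0, hl⟩ : Fin l) then (1 : ℝ) else 0) ^ 2 = 1 := by
      simp [apply_ite (fun x : ℝ => x ^ 2)]
    rw [this, Real.sqrt_one]
  -- the compact product set and the function F
  set T : Set (ℝ × (Fin l → ℝ)) := Set.Icc (a + δ) (b - δ) ×ˢ S with hTdef
  have hTcomp : IsCompact T := isCompact_Icc.prod hScomp
  have hTne : T.Nonempty := ⟨(a + δ, hSne.choose), ⟨⟨le_refl _, hKle⟩, hSne.choose_spec⟩⟩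
  set F : ℝ × (Fin l → ℝ) → ℝ := fun p => euclNorm ((A p.1).mulVec p.2) with hFdef
  have hmaps : Set.MapsTo Prod.fst T (Set.Icc a b) := fun p hp => hKIcc hp.1
  have hFc : ContinuousOn F T := by
    apply continuous_euclNorm.comp_continuousOn
    refine continuousOn_pi.2 fun i => ?_
    simp only [Matrix.mulVec, dotProduct]
    refine continuousOn_finset_sum _ fun j _ => ContinuousOn.mul ?_ ?_
    · exact ((hA i j).continuousOn).comp continuousOn_fst hmaps
    · exact ((continuous_apply j).comp continuous_snd).continuousOn
  obtain ⟨p₀, hp₀T, hmin⟩ := hTcomp.exists_isMinOn hTne hFc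
  set m : ℝ := F p₀ with hmdef
  have hm0 : 0 ≤ m := euclNorm_nonneg _
  have hm : 0 < m := by
    rcases hm0.lt_or_eq with h | h
    · exact h
    exfalso
    have hAv : (A p₀.1).mulVec p₀.2 = 0 := euclNorm_eq_zero h.symm
    have hBv : (B p₀.1).mulVec p₀.2 = 0 := by
      rw [hB, ← Matrix.mulVec_mulVec, hAv, Matrix.mulVec_zero]
    have hv0 : p₀.2 = 0 := Matrix.eq_zero_of_mulVec_eq_zero (hdet p₀.1 (hKsub hp₀T.1)) hBv
    have : euclNorm p₀.2 = 1 := hp₀T.2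
    rw [hv0, euclNorm_zero] at this
    norm_num at this
  -- uniform lower bound on K
  have key : ∀ t ∈ Set.Icc (a + δ) (b - δ), ∀ v : Fin l → ℝ,
      m * euclNorm v ≤ euclNorm ((A t).mulVec v) := by
    intro t ht v
    by_cases hv : v = 0
    · simp [hv, euclNorm_zero, Matrix.mulVec_zero]
    have hc : 0 < euclNorm v := by
      rcases (euclNorm_nonneg v).lt_or_eq with h | h
      · exact h
      · exact absurd (euclNorm_eq_zero h.symm) hv
    set c : ℝ := euclNorm v with hcdef
    set u : Fin l → ℝ := c⁻¹ • v with hudef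
    have hu1 : euclNorm u = 1 := by
      rw [hudef, euclNorm_smul, abs_inv, abs_of_pos hc, ← hcdef, inv_mul_cancel₀ hc.ne']
    have huS : (t, u) ∈ T := ⟨ht, hu1⟩
    have hFu : m ≤ F (t, u) := hmin huS
    have hvc : v = c • u := by
      rw [hudef, smul_smul, mul_inv_cancel₀ hc.ne', one_smul]
    calc m * c ≤ F (t, u) * c := by nlinarith
      _ = euclNorm ((A t).mulVec v) := by
          rw [hvc, Matrix.mulVec_smul, euclNorm_smul, abs_of_pos hc]; ring
  refine ⟨m / 2, by positivity, fun r hr hint _ _ => ?_⟩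
  set g : ℝ → ℝ := fun t => euclNorm (r t) with hgdef
  set f : ℝ → ℝ := fun t => euclNorm ((A t).mulVec (r t)) with hfdef
  set M : ℝ := supNorm a b r with hMdef
  set I : ℝ := intNorm a b r with hIdef
  have hgc : ContinuousOn g (Set.Icc a b) := continuous_euclNorm.comp_continuousOn hr
  have hfc : ContinuousOn f (Set.Icc a b) := by
    apply continuous_euclNorm.comp_continuousOn
    refine continuousOn_pi.2 fun i => ?_
    simp only [Matrix.mulVec, dotProduct]
    refine continuousOn_finset_sum _ fun j _ => ContinuousOn.mul ((hA i j).continuousOn) ?_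
    exact (continuous_apply j).comp_continuousOn hr
  have hM0 : 0 ≤ M := le_trans (euclNorm_nonneg (r a)) (le_supNorm hr ⟨le_refl a, hab.le⟩)
  have hαM : α * M ≤ I := hint
  -- integrability pieces
  have subint : ∀ (h : ℝ → ℝ), ContinuousOn h (Set.Icc a b) → ∀ c d : ℝ, a ≤ c → c ≤ d → d ≤ b →
      IntervalIntegrable h MeasureTheory.volume c d := by
    intro h hh c d hac hcd hdb
    exact (hh.mono (Set.Icc_subset_Icc hac hdb)).intervalIntegrable_of_Icc hcd
  have hg1 := subint g hgc a (a + δ) le_rfl (by linarith) (by linarith)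
  have hg2 := subint g hgc (a + δ) (b - δ) (by linarith) hKle (by linarith)
  have hg3 := subint g hgc (b - δ) b (by linarith) (by linarith) le_rfl
  have hf1 := subint f hfc a (a + δ) le_rfl (by linarith) (by linarith)
  have hf2 := subint f hfc (a + δ) (b - δ) (by linarith) hKle (by linarith)
  have hf3 := subint f hfc (b - δ) b (by linarith) (by linarith) le_rfl
  -- splitting
  have hgsplit : I = (∫ t in a..a + δ, g t) + (∫ t in a + δ..b - δ, g t)
      + (∫ t in b - δ..b, g t) := by
    rw [hIdef, intNorm]
    rw [← intervalIntegral.integral_add_adjacent_intervals (hg1.trans hg2) hg3,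
      ← intervalIntegral.integral_add_adjacent_intervals hg1 hg2]
  have hfsplit : (∫ t in a..b, f t) = (∫ t in a..a + δ, f t) + (∫ t in a + δ..b - δ, f t)
      + (∫ t in b - δ..b, f t) := by
    rw [← intervalIntegral.integral_add_adjacent_intervals (hf1.trans hf2) hf3,
      ← intervalIntegral.integral_add_adjacent_intervals hf1 hf2]
  -- endpoint bounds for g
  have hgM : ∀ c d : ℝ, a ≤ c → c ≤ d → d ≤ b →
      (∫ t in c..d, g t) ≤ (d - c) * M := by
    intro c d hac hcd hdb
    have : (∫ t in c..d, g t) ≤ ∫ t in c..d, M := by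
      apply intervalIntegral.integral_mono_on hcd (subint g hgc c d hac hcd hdb)
        intervalIntegrable_const
      intro t ht
      exact le_supNorm hr ⟨le_trans hac ht.1, le_trans ht.2 hdb⟩
    simpa [smul_eq_mul] using this
  have hg1M : (∫ t in a..a + δ, g t) ≤ δ * M := by
    have := hgM a (a + δ) le_rfl (by linarith) (by linarith)
    simpa using this
  have hg3M : (∫ t in b - δ..b, g t) ≤ δ * M := by
    have := hgM (b - δ) b (by linarith) (by linarith) le_rfl
    simpa using this
  -- endpoint f integrals nonneg
  have hf1nn : 0 ≤ ∫ t in a..a + δ, f t :=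
    intervalIntegral.integral_nonneg (by linarith) (fun t _ => euclNorm_nonneg _)
  have hf3nn : 0 ≤ ∫ t in b - δ..b, f t :=
    intervalIntegral.integral_nonneg (by linarith) (fun t _ => euclNorm_nonneg _)
  -- middle bound
  have hmid : m * ∫ t in a + δ..b - δ, g t ≤ ∫ t in a + δ..b - δ, f t := by
    rw [← intervalIntegral.integral_const_mul]
    apply intervalIntegral.integral_mono_on hKle (hg2.const_mul m) hf2
    intro t ht
    exact key t ht (r t)
  have hKg : I / 2 ≤ ∫ t in a + δ..b - δ, g t := by
    have h2δ : 2 * δ * M ≤ (α / 2) * M := by nlinarith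
    nlinarith [hgsplit, hg1M, hg3M, hαM]
  calc m / 2 * I = m * (I / 2) := by ring
    _ ≤ m * ∫ t in a + δ..b - δ, g t := by nlinarith
    _ ≤ ∫ t in a + δ..b - δ, f t := hmid
    _ ≤ ∫ t in a..b, f t := by rw [hfsplit]; linarith
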